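/- Let p_t(x,y) (t > 0, x, y ∈ ℝⁿ) be measurable kernels satisfying the Gaussian upper bound |p_t(x,y)| ≤ C t^{−n/2} e^{−c|x−y|²/t} and the conservation property ∫_{ℝⁿ} p_t(x,y) dy = 1 for every t > 0 and almost every x. Then there is a constant c′ > 0, depending only on n, C and c, such that for every f ∈ BMO(ℝⁿ): for every ball B = B(x,r) the integral ∫_{ℝⁿ} p_{r²}(y,z) f(z) dz converges absolutely for a.e. y ∈ B, and sup_{x∈ℝⁿ, r>0} (1/|B(x,r)|) ∫_{B(x,r)} | f(y) − ∫_{ℝⁿ} p_{r²}(y,z) f(z) dz | dy ≤ c′ ‖f‖_{BMO}. -/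

import Mathlib

open MeasureTheory ENNReal Real Set

noncomputable section

/-- `ℝⁿ` with the Euclidean norm. -/
abbrev En (n : ℕ) := EuclideanSpace ℝ (Fin n)

/-- Axis-parallel cube with lower corner `a` and side length `l`. -/
def cube {n : ℕ} (a : En n) (l : ℝ) : Set (En n) :=
  {x | ∀ i, x i ∈ Set.Icc (a i) (a i + l)}

/-- The classical BMO seminorm (as an extended real number):
`sup_Q (1/|Q|) ∫_Q |f - f_Q|`, supremum over all axis-parallel cubes. -/
def bmoNorm {n : ℕ} (f : En n → ℝ) : ℝ≥0∞ :=
  ⨆ (a : En n) (l : ℝ) (_ : 0 < l),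
    (∫⁻ x in cube a l, ENNReal.ofReal |f x - ⨍ y in cube a l, f y|) / volume (cube a l)

end

open Filter

lemma measurableSet_cube {n : ℕ} (a : En n) (l : ℝ) : MeasurableSet (cube a l) := by
  have : cube a l = ⋂ i, (fun x : En n => x i) ⁻¹' (Set.Icc (a i) (a i + l)) := by
    ext x; simp [cube]
  rw [this]
  exact MeasurableSet.iInter fun i =>
    ((EuclideanSpace.proj (𝕜 := ℝ) i).continuous.measurable) measurableSet_Icc

lemma isCompact_cube {n : ℕ} (a : En n) (l : ℝ) : IsCompact (cube a l) := by
  apply Metric.isCompact_of_isClosed_isBounded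
  · have : cube a l = ⋂ i, (fun x : En n => x i) ⁻¹' (Set.Icc (a i) (a i + l)) := by
      ext x; simp [cube]
    rw [this]
    exact isClosed_iInter fun i =>
      isClosed_Icc.preimage (EuclideanSpace.proj (𝕜 := ℝ) i).continuous
  · rw [Metric.isBounded_iff_subset_closedBall a]
    refine ⟨Real.sqrt n * |l|, fun x hx => ?_⟩
    rw [Metric.mem_closedBall, dist_eq_norm]
    rw [EuclideanSpace.norm_eq]
    have h1 : ∑ i, ‖(x - a) i‖ ^ 2 ≤ ∑ _i : Fin n, |l| ^ 2 := by
      apply Finset.sum_le_sum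
      intro i _
      have hxa : (x - a) i = x i - a i := rfl
      have := hx i
      rw [hxa, Real.norm_eq_abs]
      have h2 : |x i - a i| ≤ |l| := by
        rw [abs_le]
        constructor
        · linarith [(hx i).1, abs_nonneg l]
        · linarith [(hx i).2, le_abs_self l]
      exact pow_le_pow_left₀ (abs_nonneg _) h2 2
    calc Real.sqrt (∑ i, ‖(x - a) i‖ ^ 2) ≤ Real.sqrt (∑ _i : Fin n, |l| ^ 2) :=
          Real.sqrt_le_sqrt h1
      _ = Real.sqrt (n * |l| ^ 2) := by rw [Finset.sum_const]; simp [mul_comm]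
      _ ≤ Real.sqrt n * |l| := by
          rw [Real.sqrt_mul (Nat.cast_nonneg n), Real.sqrt_sq (abs_nonneg l)]

lemma volume_cube {n : ℕ} (a : En n) {l : ℝ} (hl : 0 ≤ l) :
    volume (cube a l) = ENNReal.ofReal l ^ n := by
  have hpre : cube a l =
      (MeasurableEquiv.toLp 2 (Fin n → ℝ)).symm ⁻¹'
        (Set.univ.pi fun i => Set.Icc (a i) (a i + l)) := by
    ext x
    simp only [cube, Set.mem_setOf_eq, Set.mem_preimage, Set.mem_univ_pi]
    rfl
  rw [hpre, (EuclideanSpace.volume_preserving_symm_measurableEquiv_toLp (Fin n)).measure_preimage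
    (MeasurableSet.univ_pi fun i => measurableSet_Icc).nullMeasurableSet]
  rw [volume_pi_pi]
  simp [Real.volume_Icc]


lemma abs_coord_le_norm {n : ℕ} (y : En n) (i : Fin n) : |y i| ≤ ‖y‖ := by
  rw [EuclideanSpace.norm_eq]
  have : |y i| = Real.sqrt (|y i| ^ 2) := by rw [Real.sqrt_sq_eq_abs, abs_abs]
  rw [this]
  apply Real.sqrt_le_sqrt
  have : |y i| ^ 2 = ‖y i‖ ^ 2 := by rw [Real.norm_eq_abs]
  rw [this]
  exact Finset.single_le_sum (fun j _ => sq_nonneg ‖y j‖) (Finset.mem_univ i)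

lemma norm_le_sqrt_mul {n : ℕ} (y : En n) {s : ℝ} (hs : 0 ≤ s) (h : ∀ i, |y i| ≤ s) :
    ‖y‖ ≤ Real.sqrt n * s := by
  rw [EuclideanSpace.norm_eq]
  calc Real.sqrt (∑ i, ‖y i‖ ^ 2) ≤ Real.sqrt (∑ _i : Fin n, s ^ 2) := by
        apply Real.sqrt_le_sqrt
        apply Finset.sum_le_sum
        intro i _
        rw [Real.norm_eq_abs]
        exact pow_le_pow_left₀ (abs_nonneg _) (h i) 2
    _ = Real.sqrt (n * s ^ 2) := by rw [Finset.sum_const]; simp [mul_comm]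
    _ ≤ Real.sqrt n * s := by
        rw [Real.sqrt_mul (Nat.cast_nonneg n), Real.sqrt_sq hs]

lemma summable_aux (n : ℕ) {c : ℝ} (hc : 0 < c) :
    Summable (fun k : ℕ => Real.exp (-c * 4 ^ k) * 4 ^ (k * n)) := by
  apply summable_of_ratio_norm_eventually_le (r := 1/2) (by norm_num)
  have htend : Tendsto (fun k : ℕ => (4:ℝ) ^ n * Real.exp (-(3*c) * 4 ^ k)) atTop (nhds 0) := by
    have h1 : Tendsto (fun k : ℕ => (4:ℝ) ^ k) atTop atTop :=
      tendsto_pow_atTop_atTop_of_one_lt (by norm_num)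
    have h2 : Tendsto (fun k : ℕ => -(3*c) * (4:ℝ) ^ k) atTop atBot := by
      apply Tendsto.const_mul_atTop_of_neg (by linarith) h1
    have h3 := (Real.tendsto_exp_atBot).comp h2
    have := h3.const_mul ((4:ℝ) ^ n)
    simpa using this
  filter_upwards [htend.eventually_lt_const (by norm_num : (0:ℝ) < 1/2)] with k hk
  have hpos : (0:ℝ) < Real.exp (-c * 4 ^ k) * 4 ^ (k * n) := by positivity
  rw [Real.norm_eq_abs, Real.norm_eq_abs, abs_of_pos (by positivity), abs_of_pos hpos]
  have key : Real.exp (-c * 4 ^ (k+1)) * 4 ^ ((k+1) * n)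
      = ((4:ℝ) ^ n * Real.exp (-(3*c) * 4 ^ k)) * (Real.exp (-c * 4 ^ k) * 4 ^ (k * n)) := by
    rw [show -c * (4:ℝ)^(k+1) = -(3*c)*4^k + -c*4^k by rw [pow_succ]; ring, Real.exp_add,
      show (k+1)*n = k*n + n by ring, pow_add]
    ring
  rw [key]
  exact mul_le_mul_of_nonneg_right hk.le hpos.le


lemma integrable_gauss {n : ℕ} {b : ℝ} (hb : 0 < b) (y : En n) :
    Integrable (fun z : En n => Real.exp (-b * ‖y - z‖ ^ 2)) := by
  have h0 : Integrable (fun v : En n => Real.exp (-b * ‖v‖ ^ 2)) := by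
    have hc := GaussianFourier.integrable_cexp_neg_mul_sq_norm_add
      (V := En n) (b := (b : ℂ)) (by simpa using hb) 0 0
    have := hc.norm
    convert this using 2 with v
    rw [Complex.norm_exp]
    norm_num
    left
    norm_cast
  have h1 : Integrable (fun z : En n => Real.exp (-b * ‖z - y‖ ^ 2)) :=
    h0.comp_sub_right y
  convert h1 using 2 with z
  rw [norm_sub_rev]

lemma lintegral_piece_le {n : ℕ} {g h : En n → ℝ} {s : Set (En n)}
    (hs : MeasurableSet s) {κ I : ℝ} (hκ : 0 ≤ κ)
    (hg : ∀ z ∈ s, |g z| ≤ κ) (hh : IntegrableOn (fun z => |h z|) s)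
    (hI : (∫ z in s, |h z|) ≤ I) :
    (∫⁻ z in s, ENNReal.ofReal |g z * h z|) ≤ ENNReal.ofReal (κ * I) := by
  calc (∫⁻ z in s, ENNReal.ofReal |g z * h z|)
      ≤ ∫⁻ z in s, ENNReal.ofReal κ * ENNReal.ofReal |h z| := by
        apply lintegral_mono_ae
        filter_upwards [ae_restrict_mem hs] with z hz
        rw [← ENNReal.ofReal_mul hκ, abs_mul]
        exact ENNReal.ofReal_le_ofReal
          (mul_le_mul_of_nonneg_right (hg z hz) (abs_nonneg _))
    _ = ENNReal.ofReal κ * ∫⁻ z in s, ENNReal.ofReal |h z| :=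
        lintegral_const_mul' _ _ ENNReal.ofReal_ne_top
    _ ≤ ENNReal.ofReal κ * ENNReal.ofReal I := by
        apply mul_le_mul_right
        rw [← ofReal_integral_eq_lintegral_ofReal hh
          (Filter.Eventually.of_forall fun z => abs_nonneg _)]
        exact ENNReal.ofReal_le_ofReal hI
    _ = ENNReal.ofReal (κ * I) := (ENNReal.ofReal_mul hκ).symm

-- appended to all.lean for testing
lemma cube_volume_lt_top {n : ℕ} (a : En n) (l : ℝ) : volume (cube a l) < ⊤ :=
  (isCompact_cube a l).measure_lt_top

variable {n : ℕ} {f : En n → ℝ}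

lemma integrableOn_cube (hf : LocallyIntegrable f volume) (a : En n) (l : ℝ) :
    IntegrableOn f (cube a l) volume :=
  hf.integrableOn_isCompact (isCompact_cube a l)

lemma integrableOn_cube_abs (hf : LocallyIntegrable f volume) (a : En n) (l : ℝ) (d : ℝ) :
    IntegrableOn (fun z => |f z - d|) (cube a l) volume :=
  ((integrableOn_cube hf a l).sub
    (integrableOn_const (cube_volume_lt_top a l).ne)).abs

lemma bmo_cube_bound (hf : LocallyIntegrable f volume) (hbmo : bmoNorm f < ⊤)
    (a : En n) {l : ℝ} (hl : 0 < l) :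
    (∫ z in cube a l, |f z - ⨍ w in cube a l, f w|) ≤ (bmoNorm f).toReal * l ^ n := by
  set Q := cube a l with hQ
  set d := ⨍ w in Q, f w with hd
  have hQvol : volume Q = ENNReal.ofReal l ^ n := volume_cube a hl.le
  have hQne : volume Q ≠ 0 := by
    rw [hQvol]
    exact pow_ne_zero _ (by simp [ENNReal.ofReal_eq_zero]; linarith)
  have hQtop : volume Q ≠ ⊤ := (cube_volume_lt_top a l).ne
  have hint : IntegrableOn (fun z => |f z - d|) Q volume := integrableOn_cube_abs hf a l d
  have h1 : (∫⁻ z in Q, ENNReal.ofReal |f z - d|) / volume Q ≤ bmoNorm f :=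
    le_iSup_of_le a (le_iSup_of_le l (le_iSup_of_le hl le_rfl))
  have h2 : (∫⁻ z in Q, ENNReal.ofReal |f z - d|) ≤ bmoNorm f * volume Q := by
    rwa [ENNReal.div_le_iff_le_mul (Or.inl hQne) (Or.inl hQtop)] at h1
  have h3 : ENNReal.ofReal (∫ z in Q, |f z - d|) = ∫⁻ z in Q, ENNReal.ofReal |f z - d| :=
    ofReal_integral_eq_lintegral_ofReal hint
      (Filter.Eventually.of_forall fun z => abs_nonneg _)
  have h4 : (∫ z in Q, |f z - d|) = (∫⁻ z in Q, ENNReal.ofReal |f z - d|).toReal := by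
    rw [← h3, ENNReal.toReal_ofReal (integral_nonneg fun z => abs_nonneg _)]
  rw [h4]
  have h5 : (bmoNorm f * volume Q).toReal = (bmoNorm f).toReal * l ^ n := by
    rw [ENNReal.toReal_mul, hQvol, ENNReal.toReal_pow, ENNReal.toReal_ofReal hl.le]
  rw [← h5]
  exact ENNReal.toReal_mono (ENNReal.mul_ne_top hbmo.ne hQtop) h2

lemma bmo_avg_diff (hf : LocallyIntegrable f volume) (hbmo : bmoNorm f < ⊤)
    {a a' : En n} {l l' : ℝ} (hl : 0 < l) (hl' : 0 < l') (hsub : cube a l ⊆ cube a' l') :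
    |(⨍ w in cube a l, f w) - ⨍ w in cube a' l', f w| ≤
      (bmoNorm f).toReal * l' ^ n / l ^ n := by
  set Q := cube a l with hQ
  set Q' := cube a' l' with hQ'
  set d := ⨍ w in Q', f w with hd
  have hvolR : (volume Q).toReal = l ^ n := by
    rw [volume_cube a hl.le, ENNReal.toReal_pow, ENNReal.toReal_ofReal hl.le]
  have hQpos : (0:ℝ) < l ^ n := by positivity
  have h1 : (⨍ w in Q, f w) - d = (volume Q).toReal⁻¹ * ∫ w in Q, (f w - d) := by
    rw [setAverage_eq, integral_sub (integrableOn_cube hf a l)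
      (integrableOn_const (cube_volume_lt_top a l).ne), setIntegral_const, measureReal_def]
    rw [smul_eq_mul, smul_eq_mul, mul_sub, hvolR]
    field_simp
    rfl
  have h2 : |(⨍ w in Q, f w) - d| ≤ (volume Q).toReal⁻¹ * ∫ w in Q, |f w - d| := by
    rw [h1, abs_mul, abs_of_nonneg (inv_nonneg.2 ENNReal.toReal_nonneg)]
    apply mul_le_mul_of_nonneg_left _ (inv_nonneg.2 ENNReal.toReal_nonneg)
    simpa [Real.norm_eq_abs] using
      norm_integral_le_integral_norm (μ := volume.restrict Q) (fun w => f w - d)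
  have h3 : (∫ w in Q, |f w - d|) ≤ ∫ w in Q', |f w - d| :=
    setIntegral_mono_set (integrableOn_cube_abs hf a' l' d)
      (Filter.Eventually.of_forall fun z => abs_nonneg _) (HasSubset.Subset.eventuallyLE hsub)
  have h4 : (∫ w in Q', |f w - d|) ≤ (bmoNorm f).toReal * l' ^ n := bmo_cube_bound hf hbmo a' hl'
  calc |(⨍ w in Q, f w) - d| ≤ (volume Q).toReal⁻¹ * ∫ w in Q, |f w - d| := h2
    _ ≤ (volume Q).toReal⁻¹ * ((bmoNorm f).toReal * l' ^ n) := by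
        apply mul_le_mul_of_nonneg_left (h3.trans h4) (inv_nonneg.2 ENNReal.toReal_nonneg)
    _ = (bmoNorm f).toReal * l' ^ n / l ^ n := by rw [hvolR]; field_simp

lemma bmo_cube_bound2 (hf : LocallyIntegrable f volume) (hbmo : bmoNorm f < ⊤)
    {a a' : En n} {l l' : ℝ} (hl : 0 < l) (hl' : 0 < l') (hsub : cube a l ⊆ cube a' l') :
    (∫ z in cube a' l', |f z - ⨍ w in cube a l, f w|) ≤
      (bmoNorm f).toReal * l' ^ n * (1 + l' ^ n / l ^ n) := by
  set c₀ := ⨍ w in cube a l, f w with hc₀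
  set d := ⨍ w in cube a' l', f w with hd
  have h1 : ∀ z, |f z - c₀| ≤ |f z - d| + |d - c₀| := fun z => by
    have : f z - c₀ = (f z - d) + (d - c₀) := by ring
    rw [this]; exact abs_add_le _ _
  have h2 : (∫ z in cube a' l', |f z - c₀|) ≤
      (∫ z in cube a' l', |f z - d|) + (volume (cube a' l')).toReal * |d - c₀| := by
    have := integral_mono (μ := volume.restrict (cube a' l'))
      (integrableOn_cube_abs hf a' l' c₀)
      ((integrableOn_cube_abs hf a' l' d).add
        (integrableOn_const (cube_volume_lt_top a' l').ne))
      h1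
    simp only [Pi.add_apply] at this
    rw [integral_add (integrableOn_cube_abs hf a' l' d)
      (integrableOn_const (cube_volume_lt_top a' l').ne)] at this
    simpa [setIntegral_const, measureReal_def,
      smul_eq_mul] using this
  have hvolR : (volume (cube a' l')).toReal = l' ^ n := by
    rw [volume_cube a' hl'.le, ENNReal.toReal_pow, ENNReal.toReal_ofReal hl'.le]
  have h3 : |d - c₀| ≤ (bmoNorm f).toReal * l' ^ n / l ^ n := by
    rw [abs_sub_comm]; exact bmo_avg_diff hf hbmo hl hl' hsub
  calc (∫ z in cube a' l', |f z - c₀|)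
      ≤ (∫ z in cube a' l', |f z - d|) + (volume (cube a' l')).toReal * |d - c₀| := h2
    _ ≤ (bmoNorm f).toReal * l' ^ n + l' ^ n * ((bmoNorm f).toReal * l' ^ n / l ^ n) := by
        apply add_le_add (bmo_cube_bound hf hbmo a' hl')
        rw [hvolR]
        exact mul_le_mul_of_nonneg_left h3 (by positivity)
    _ = (bmoNorm f).toReal * l' ^ n * (1 + l' ^ n / l ^ n) := by ring

set_option maxHeartbeats 1000000 in
lemma perball {n : ℕ} {C c : ℝ} (hC : 0 < C) (hc : 0 < c)
    (p : ℝ → En n → En n → ℝ)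
    (hmeas : ∀ t : ℝ, Measurable (Function.uncurry (p t)))
    (hgauss : ∀ t : ℝ, 0 < t → ∀ x y : En n,
      |p t x y| ≤ C * t ^ (-(n : ℝ) / 2) * Real.exp (-c * ‖x - y‖ ^ 2 / t))
    (hcons : ∀ t : ℝ, 0 < t → ∀ᵐ x : En n ∂volume, (∫ y : En n, p t x y) = 1)
    {f : En n → ℝ} (hf : LocallyIntegrable f volume) (hbmo : bmoNorm f < ⊤)
    (x : En n) {r : ℝ} (hr : 0 < r) :
    (∀ y ∈ Metric.ball x r, Integrable (fun z => p (r ^ 2) y z * f z) volume) ∧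
    (∫⁻ y in Metric.ball x r, ENNReal.ofReal |f y - ∫ z : En n, p (r ^ 2) y z * f z|) ≤
      ENNReal.ofReal ((2 * Real.sqrt n + 2) ^ n +
        C * (4 ^ n * (1 + 2 ^ n) +
          2 * 2 ^ (5 * n) * ∑' k : ℕ, Real.exp (-c * 4 ^ k) * 4 ^ (k * n)))
        * bmoNorm f * volume (Metric.ball x r) := by
  set M : ℝ := (bmoNorm f).toReal with hMdef
  have hM0 : 0 ≤ M := ENNReal.toReal_nonneg
  set S : ℝ := ∑' k : ℕ, Real.exp (-c * 4 ^ k) * 4 ^ (k * n) with hSdef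
  have hSsum : Summable (fun k : ℕ => Real.exp (-c * 4 ^ k) * 4 ^ (k * n)) := summable_aux n hc
  have hS0 : 0 ≤ S := tsum_nonneg fun k => by positivity
  set A : ℝ := C * (4 ^ n * (1 + 2 ^ n) + 2 * 2 ^ (5 * n) * S) with hAdef
  have hA0 : 0 ≤ A := by positivity
  set β : ℝ := 2 * Real.sqrt n + 2 with hβdef
  have hβ : 0 < β := by positivity
  set t : ℝ := r ^ 2 with htdef
  have ht : 0 < t := by positivity
  -- the nested cubes
  set Q : ℕ → Set (En n) := fun k => cube (WithLp.toLp 2 fun i => x i - 2 ^ k * r) (2 ^ (k + 1) * r) with hQdef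
  set c₀ : ℝ := ⨍ w in Q 0, f w with hc₀def
  have hQmem : ∀ k (z : En n), z ∈ Q k ↔ ∀ i, |z i - x i| ≤ 2 ^ k * r := by
    intro k z
    have e : (2:ℝ) ^ (k + 1) * r = 2 ^ k * r + 2 ^ k * r := by rw [pow_succ]; ring
    simp only [hQdef, cube, Set.mem_setOf_eq, Set.mem_Icc, WithLp.ofLp_toLp]
    constructor
    · intro hz i
      obtain ⟨h1, h2⟩ := hz i
      rw [abs_le]
      constructor <;> linarith
    · intro hz i
      have h := abs_le.1 (hz i)
      constructor
      · linarith [h.1]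
      · linarith [h.2]
  have hQsub : ∀ j k, j ≤ k → Q j ⊆ Q k := by
    intro j k hjk z hz
    rw [hQmem] at hz ⊢
    intro i
    exact (hz i).trans (mul_le_mul_of_nonneg_right
      (pow_le_pow_right₀ (by norm_num) hjk) hr.le)
  have hball_sub : Metric.ball x r ⊆ Q 0 := by
    intro z hz
    rw [hQmem]
    intro i
    have h1 : |(z - x) i| ≤ ‖z - x‖ := abs_coord_le_norm (z - x) i
    have h2 : ‖z - x‖ < r := by rwa [Metric.mem_ball, dist_eq_norm] at hz
    have h3 : (z - x) i = z i - x i := rfl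
    rw [h3] at h1
    simpa using h1.trans h2.le
  have hfar : ∀ (k : ℕ) (z : En n), z ∉ Q (k + 1) →
      ∀ y ∈ Metric.ball x r, 2 ^ k * r ≤ ‖y - z‖ := by
    intro k z hz y hy
    rw [hQmem] at hz
    push_neg at hz
    obtain ⟨i, hi⟩ := hz
    have h1 : |(y - z) i| ≤ ‖y - z‖ := abs_coord_le_norm (y - z) i
    have h2 : ‖y - x‖ < r := by rwa [Metric.mem_ball, dist_eq_norm] at hy
    have h3 : |(y - x) i| ≤ ‖y - x‖ := abs_coord_le_norm (y - x) i
    have h4 : (y - z) i = y i - z i := rfl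
    have h5 : (y - x) i = y i - x i := rfl
    rw [h4] at h1
    rw [h5] at h3
    have h6 : |z i - x i| - |y i - x i| ≤ |y i - z i| := by
      have := abs_sub_abs_le_abs_sub (z i - x i) (y i - x i)
      have h7 : z i - x i - (y i - x i) = -(y i - z i) := by ring
      rw [h7, abs_neg] at this
      linarith
    have h8 : (2:ℝ) ^ (k + 1) * r = 2 * (2 ^ k * r) := by ring
    have h9 : (1:ℝ) ≤ 2 ^ k := one_le_pow₀ (by norm_num)
    nlinarith [h1, h3, h6, hi, h2]
  -- lower bound on the volume of the ball
  have hcube_sub_ball : cube (WithLp.toLp 2 fun i => x i - r / β) (2 * (r / β)) ⊆ Metric.ball x r := by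
    intro z hz
    simp only [cube, Set.mem_setOf_eq, Set.mem_Icc, WithLp.ofLp_toLp] at hz
    have h1 : ∀ i, |(z - x) i| ≤ r / β := by
      intro i
      have h2 := (hz i).1
      have h3 := (hz i).2
      have h4 : (z - x) i = z i - x i := rfl
      rw [h4, abs_le]
      constructor <;> linarith
    have h5 : ‖z - x‖ ≤ Real.sqrt n * (r / β) :=
      norm_le_sqrt_mul (z - x) (by positivity) h1
    rw [Metric.mem_ball, dist_eq_norm]
    apply lt_of_le_of_lt h5
    have h6 : Real.sqrt n < β := by nlinarith [Real.sqrt_nonneg (n : ℝ)]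
    calc Real.sqrt n * (r / β) < β * (r / β) :=
          mul_lt_mul_of_pos_right h6 (by positivity)
      _ = r := by field_simp
  have hvolB_lb : ENNReal.ofReal (2 * (r / β)) ^ n ≤ volume (Metric.ball x r) := by
    rw [← volume_cube (WithLp.toLp 2 fun i => x i - r / β) (by positivity)]
    exact measure_mono hcube_sub_ball
  -- rpow identity
  have hrpow : (t : ℝ) ^ (-(n : ℝ) / 2) = (r ^ n)⁻¹ := by
    rw [htdef]
    have h1 : (r ^ 2 : ℝ) = r ^ (2 : ℝ) := by
      rw [← Real.rpow_natCast r 2]; norm_num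
    rw [h1, ← Real.rpow_mul hr.le, show (2:ℝ) * (-(n:ℝ)/2) = -(n:ℝ) by ring,
      Real.rpow_neg hr.le, Real.rpow_natCast]
  have hker0 : ∀ y z : En n, |p t y z| ≤ C * (r ^ n)⁻¹ := by
    intro y z
    have h := hgauss t ht y z
    rw [hrpow] at h
    have h2 : Real.exp (-c * ‖y - z‖ ^ 2 / t) ≤ 1 := by
      rw [Real.exp_le_one_iff, show -c * ‖y - z‖ ^ 2 / t = -(c * ‖y - z‖ ^ 2 / t) by ring,
        neg_nonpos]
      positivity
    calc |p t y z| ≤ C * (r ^ n)⁻¹ * Real.exp (-c * ‖y - z‖ ^ 2 / t) := h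
      _ ≤ C * (r ^ n)⁻¹ * 1 := mul_le_mul_of_nonneg_left h2 (by positivity)
      _ = C * (r ^ n)⁻¹ := mul_one _
  have hkerk : ∀ (k : ℕ) (y : En n), y ∈ Metric.ball x r → ∀ z, z ∉ Q (k + 1) →
      |p t y z| ≤ C * (r ^ n)⁻¹ * Real.exp (-c * 4 ^ k) := by
    intro k y hy z hz
    have h := hgauss t ht y z
    rw [hrpow] at h
    have hd := hfar k z hz y hy
    have hsq : 4 ^ k * r ^ 2 ≤ ‖y - z‖ ^ 2 := by
      have h4 : ((2:ℝ) ^ k * r) ^ 2 = 4 ^ k * r ^ 2 := by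
        rw [mul_pow]
        congr 1
        rw [← pow_mul, mul_comm k 2, pow_mul]
        norm_num
      rw [← h4]
      exact pow_le_pow_left₀ (by positivity) hd 2
    have hexp : Real.exp (-c * ‖y - z‖ ^ 2 / t) ≤ Real.exp (-c * 4 ^ k) := by
      apply Real.exp_le_exp.2
      rw [div_le_iff₀ ht, htdef]
      nlinarith [mul_le_mul_of_nonneg_left hsq hc.le]
    calc |p t y z| ≤ C * (r ^ n)⁻¹ * Real.exp (-c * ‖y - z‖ ^ 2 / t) := h
      _ ≤ C * (r ^ n)⁻¹ * Real.exp (-c * 4 ^ k) :=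
          mul_le_mul_of_nonneg_left hexp (by positivity)
  -- integral bounds over the cubes
  have hrn : (0:ℝ) < r ^ n := by positivity
  have hQb : ∀ k : ℕ, (∫ z in Q k, |f z - c₀|) ≤
      M * (2 ^ (k + 1) * r) ^ n * (1 + 2 ^ (k * n)) := by
    intro k
    have h := bmo_cube_bound2 hf hbmo (a := WithLp.toLp 2 fun i => x i - 2 ^ 0 * r)
      (a' := WithLp.toLp 2 fun i => x i - 2 ^ k * r) (l := 2 ^ (0 + 1) * r) (l' := 2 ^ (k + 1) * r)
      (by positivity) (by positivity) (hQsub 0 k (Nat.zero_le k))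
    have hratio : ((2:ℝ) ^ (k + 1) * r) ^ n / ((2:ℝ) ^ (0 + 1) * r) ^ n = 2 ^ (k * n) := by
      rw [← div_pow]
      have h2 : ((2:ℝ) ^ (k + 1) * r) / ((2:ℝ) ^ (0 + 1) * r) = 2 ^ k := by
        rw [pow_succ]
        field_simp
        ring
      rw [h2, ← pow_mul]
    rw [hratio] at h
    exact h
  have hfabs : ∀ (k : ℕ) (d : ℝ), IntegrableOn (fun z => |f z - d|) (Q k) volume :=
    fun k d => integrableOn_cube_abs hf _ _ d
  have hmeasQ : ∀ k, MeasurableSet (Q k) := fun k => measurableSet_cube _ _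
  have hpieceQ1 : ∀ y : En n,
      (∫⁻ z in Q 1, ENNReal.ofReal |p t y z * (f z - c₀)|) ≤
        ENNReal.ofReal (C * M * (4 ^ n * (1 + 2 ^ n))) := by
    intro y
    have h := lintegral_piece_le (g := fun z => p t y z) (h := fun z => f z - c₀)
      (hmeasQ 1) (by positivity : (0:ℝ) ≤ C * (r ^ n)⁻¹) (fun z _ => hker0 y z)
      (hfabs 1 c₀) (hQb 1)
    apply h.trans
    apply ENNReal.ofReal_le_ofReal
    have e1 : ((2:ℝ) ^ (1 + 1) * r) ^ n = 4 ^ n * r ^ n := by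
      rw [mul_pow]; norm_num
    rw [e1, one_mul]
    apply le_of_eq
    field_simp
  have hpieceD : ∀ (k : ℕ) (y : En n), y ∈ Metric.ball x r →
      (∫⁻ z in Q (k + 2) \ Q (k + 1), ENNReal.ofReal |p t y z * (f z - c₀)|) ≤
        ENNReal.ofReal (C * M * (2 * 2 ^ (5 * n)) * (Real.exp (-c * 4 ^ k) * 4 ^ (k * n))) := by
    intro k y hy
    have hDk : MeasurableSet (Q (k + 2) \ Q (k + 1)) := (hmeasQ _).diff (hmeasQ _)
    have hIle : (∫ z in Q (k + 2) \ Q (k + 1), |f z - c₀|) ≤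
        M * (2 ^ (k + 2 + 1) * r) ^ n * (1 + 2 ^ ((k + 2) * n)) := by
      refine (setIntegral_mono_set (hfabs (k + 2) c₀)
        (Filter.Eventually.of_forall fun z => abs_nonneg _)
        (HasSubset.Subset.eventuallyLE diff_subset)).trans ?_
      exact hQb (k + 2)
    have h := lintegral_piece_le (g := fun z => p t y z) (h := fun z => f z - c₀) hDk
      (by positivity : (0:ℝ) ≤ C * (r ^ n)⁻¹ * Real.exp (-c * 4 ^ k))
      (fun z hz => hkerk k y hy z hz.2) ((hfabs (k + 2) c₀).mono_set diff_subset) hIle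
    apply h.trans
    apply ENNReal.ofReal_le_ofReal
    set E : ℝ := Real.exp (-c * 4 ^ k) with hE
    have hE0 : 0 < E := Real.exp_pos _
    have e1 : ((2:ℝ) ^ (k + 2 + 1) * r) ^ n = 2 ^ ((k + 3) * n) * r ^ n := by
      rw [mul_pow, ← pow_mul]
    have e2 : (2:ℝ) ^ ((k + 3) * n) * (2:ℝ) ^ ((k + 2) * n) = 2 ^ (5 * n) * 4 ^ (k * n) := by
      rw [← pow_add, show (4:ℝ) = 2 ^ 2 by norm_num, ← pow_mul, ← pow_add]
      congr 1
      ring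
    have h1 : (1:ℝ) + 2 ^ ((k + 2) * n) ≤ 2 * 2 ^ ((k + 2) * n) := by
      have : (1:ℝ) ≤ 2 ^ ((k + 2) * n) := one_le_pow₀ (by norm_num)
      linarith
    calc C * (r ^ n)⁻¹ * E * (M * ((2:ℝ) ^ (k + 2 + 1) * r) ^ n * (1 + 2 ^ ((k + 2) * n)))
        = C * M * E * 2 ^ ((k + 3) * n) * (1 + 2 ^ ((k + 2) * n)) := by
          rw [e1]; field_simp
      _ ≤ C * M * E * 2 ^ ((k + 3) * n) * (2 * 2 ^ ((k + 2) * n)) := by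
          apply mul_le_mul_of_nonneg_left h1 (by positivity)
      _ = C * M * (2 * 2 ^ (5 * n)) * (E * 4 ^ (k * n)) := by
          rw [show C * M * E * 2 ^ ((k + 3) * n) * (2 * 2 ^ ((k + 2) * n))
              = C * M * 2 * (E * (2 ^ ((k + 3) * n) * 2 ^ ((k + 2) * n))) by ring, e2]
          ring
  -- covering of space
  have hcover : (Set.univ : Set (En n)) ⊆ Q 1 ∪ ⋃ k : ℕ, (Q (k + 2) \ Q (k + 1)) := by
    intro z _
    have hzk : ∃ k : ℕ, z ∈ Q k := by
      obtain ⟨k, hk⟩ := pow_unbounded_of_one_lt (‖z - x‖ / r) (by norm_num : (1:ℝ) < 2)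
      refine ⟨k, (hQmem k z).2 fun i => ?_⟩
      have h1 : |(z - x) i| ≤ ‖z - x‖ := abs_coord_le_norm (z - x) i
      have h2 : ‖z - x‖ < 2 ^ k * r := by rwa [div_lt_iff₀ hr] at hk
      have h3 : (z - x) i = z i - x i := rfl
      rw [h3] at h1
      linarith
    obtain ⟨k, hk⟩ := hzk
    suffices hind : ∀ m, z ∈ Q m → z ∈ Q 1 ∪ ⋃ j : ℕ, (Q (j + 2) \ Q (j + 1)) from hind k hk
    intro m
    induction m with
    | zero => exact fun h0 => Or.inl (hQsub 0 1 (by norm_num) h0)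
    | succ m ih =>
      intro hm1
      by_cases hzm : z ∈ Q m
      · exact ih hzm
      · rcases Nat.eq_zero_or_pos m with rfl | hmpos
        · exact Or.inl hm1
        · right
          refine Set.mem_iUnion.2 ⟨m - 1, ?_⟩
          have e1 : m - 1 + 2 = m + 1 := by omega
          have e2 : m - 1 + 1 = m := by omega
          rw [e1, e2]
          exact ⟨hm1, hzm⟩
  have hGlobal : ∀ y ∈ Metric.ball x r,
      (∫⁻ z, ENNReal.ofReal |p t y z * (f z - c₀)|) ≤ ENNReal.ofReal (A * M) := by
    intro y hy
    have hres : (volume : Measure (En n)) ≤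
        volume.restrict (Q 1) +
          Measure.sum fun k : ℕ => volume.restrict (Q (k + 2) \ Q (k + 1)) := by
      calc (volume : Measure (En n)) = volume.restrict Set.univ := Measure.restrict_univ.symm
        _ ≤ volume.restrict (Q 1 ∪ ⋃ k : ℕ, (Q (k + 2) \ Q (k + 1))) :=
            Measure.restrict_mono hcover le_rfl
        _ ≤ volume.restrict (Q 1) +
              volume.restrict (⋃ k : ℕ, (Q (k + 2) \ Q (k + 1))) :=
            Measure.restrict_union_le _ _
        _ ≤ _ := add_le_add_right Measure.restrict_iUnion_le _
    have step1 : (∫⁻ z, ENNReal.ofReal |p t y z * (f z - c₀)|) ≤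
        (∫⁻ z in Q 1, ENNReal.ofReal |p t y z * (f z - c₀)|) +
        ∑' k : ℕ, ∫⁻ z in Q (k + 2) \ Q (k + 1), ENNReal.ofReal |p t y z * (f z - c₀)| := by
      calc (∫⁻ z, ENNReal.ofReal |p t y z * (f z - c₀)|)
          ≤ ∫⁻ z, ENNReal.ofReal |p t y z * (f z - c₀)|
              ∂(volume.restrict (Q 1) +
                Measure.sum fun k : ℕ => volume.restrict (Q (k + 2) \ Q (k + 1))) :=
            lintegral_mono' hres le_rfl
        _ = _ := by rw [lintegral_add_measure, lintegral_sum_measure]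
    refine step1.trans ?_
    have step2 : (∑' k : ℕ, ∫⁻ z in Q (k + 2) \ Q (k + 1),
        ENNReal.ofReal |p t y z * (f z - c₀)|) ≤
        ENNReal.ofReal (C * M * (2 * 2 ^ (5 * n)) * S) := by
      calc (∑' k : ℕ, ∫⁻ z in Q (k + 2) \ Q (k + 1),
            ENNReal.ofReal |p t y z * (f z - c₀)|)
          ≤ ∑' k : ℕ, ENNReal.ofReal
              (C * M * (2 * 2 ^ (5 * n)) * (Real.exp (-c * 4 ^ k) * 4 ^ (k * n))) :=
            ENNReal.tsum_le_tsum fun k => hpieceD k y hy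
        _ = ENNReal.ofReal (∑' k : ℕ,
              C * M * (2 * 2 ^ (5 * n)) * (Real.exp (-c * 4 ^ k) * 4 ^ (k * n))) :=
            (ENNReal.ofReal_tsum_of_nonneg (fun k => by positivity) (hSsum.mul_left _)).symm
        _ = ENNReal.ofReal (C * M * (2 * 2 ^ (5 * n)) * S) := by rw [tsum_mul_left]
    calc (∫⁻ z in Q 1, ENNReal.ofReal |p t y z * (f z - c₀)|) +
          (∑' k : ℕ, ∫⁻ z in Q (k + 2) \ Q (k + 1), ENNReal.ofReal |p t y z * (f z - c₀)|)
        ≤ ENNReal.ofReal (C * M * (4 ^ n * (1 + 2 ^ n))) +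
            ENNReal.ofReal (C * M * (2 * 2 ^ (5 * n)) * S) := add_le_add (hpieceQ1 y) step2
      _ = ENNReal.ofReal (A * M) := by
          rw [← ENNReal.ofReal_add (by positivity) (by positivity)]
          congr 1
          rw [hAdef]
          ring
  -- integrability
  have hmeasp : ∀ y : En n, Measurable fun z => p t y z := fun y => (hmeas t).of_uncurry_left
  have hpint : ∀ y : En n, Integrable (fun z => p t y z) volume := by
    intro y
    apply Integrable.mono'
      (((integrable_gauss (n := n) (b := c / t) (by positivity) y)).const_mul (C * (r ^ n)⁻¹))
    · exact (hmeasp y).aestronglyMeasurable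
    · filter_upwards with z
      rw [Real.norm_eq_abs]
      calc |p t y z| ≤ C * t ^ (-(n:ℝ)/2) * Real.exp (-c * ‖y - z‖ ^ 2 / t) := hgauss t ht y z
        _ = C * (r ^ n)⁻¹ * Real.exp (-(c / t) * ‖y - z‖ ^ 2) := by
            rw [hrpow]
            congr 2
            ring
  have hfmc : ∀ y ∈ Metric.ball x r, Integrable (fun z => p t y z * (f z - c₀)) volume := by
    intro y hy
    refine ⟨((hmeasp y).aestronglyMeasurable.mul
      (hf.aestronglyMeasurable.sub aestronglyMeasurable_const)), ?_⟩
    rw [hasFiniteIntegral_iff_norm]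
    simp only [Real.norm_eq_abs]
    exact lt_of_le_of_lt (hGlobal y hy) ENNReal.ofReal_lt_top
  have hint_pf : ∀ y ∈ Metric.ball x r, Integrable (fun z => p t y z * f z) volume := by
    intro y hy
    exact ((hfmc y hy).add ((hpint y).mul_const c₀)).congr
      (Filter.Eventually.of_forall fun z => by simp only [Pi.add_apply]; ring)
  refine ⟨hint_pf, ?_⟩
  -- pointwise bound
  have hptwise : ∀ y ∈ Metric.ball x r, (∫ z, p t y z) = 1 →
      |f y - ∫ z, p t y z * f z| ≤ |f y - c₀| + A * M := by
    intro y hy hconsy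
    have hTf : (∫ z, p t y z * f z) = (∫ z, p t y z * (f z - c₀)) + c₀ := by
      calc (∫ z, p t y z * f z) = ∫ z, (p t y z * (f z - c₀) + p t y z * c₀) := by
            congr 1; funext z; ring
        _ = (∫ z, p t y z * (f z - c₀)) + ∫ z, p t y z * c₀ :=
            integral_add (hfmc y hy) ((hpint y).mul_const c₀)
        _ = (∫ z, p t y z * (f z - c₀)) + (∫ z, p t y z) * c₀ := by rw [integral_mul_const]
        _ = (∫ z, p t y z * (f z - c₀)) + c₀ := by rw [hconsy, one_mul]
    have habs : |∫ z, p t y z * (f z - c₀)| ≤ A * M := by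
      have h1 : |∫ z, p t y z * (f z - c₀)| ≤ ∫ z, |p t y z * (f z - c₀)| := by
        simpa [Real.norm_eq_abs, abs_mul] using
          norm_integral_le_integral_norm (μ := volume) (fun z => p t y z * (f z - c₀))
      have h2 : ENNReal.ofReal (∫ z, |p t y z * (f z - c₀)|) ≤ ENNReal.ofReal (A * M) := by
        rw [ofReal_integral_eq_lintegral_ofReal (hfmc y hy).abs
          (Filter.Eventually.of_forall fun z => abs_nonneg _)]
        exact hGlobal y hy
      have h3 : (∫ z, |p t y z * (f z - c₀)|) ≤ A * M := by
        have h4 := ENNReal.toReal_mono ENNReal.ofReal_ne_top h2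
        rwa [ENNReal.toReal_ofReal (integral_nonneg fun z => abs_nonneg _),
          ENNReal.toReal_ofReal (by positivity)] at h4
      exact h1.trans h3
    rw [hTf, show f y - ((∫ z, p t y z * (f z - c₀)) + c₀)
        = (f y - c₀) - ∫ z, p t y z * (f z - c₀) by ring]
    calc |(f y - c₀) - ∫ z, p t y z * (f z - c₀)|
        ≤ |f y - c₀| + |∫ z, p t y z * (f z - c₀)| := by
          rw [sub_eq_add_neg]
          exact (abs_add_le _ _).trans (le_of_eq (by rw [abs_neg]))
      _ ≤ |f y - c₀| + A * M := add_le_add_right habs _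
  have hMof : ENNReal.ofReal M = bmoNorm f := ENNReal.ofReal_toReal hbmo.ne
  have hQ0bound : (∫ y in Q 0, |f y - c₀|) ≤ M * (2 ^ (0 + 1) * r) ^ n := by
    exact bmo_cube_bound hf hbmo _ (by positivity)
  have key1 : ENNReal.ofReal (M * (2 ^ (0 + 1) * r) ^ n) ≤
      ENNReal.ofReal (β ^ n * M) * volume (Metric.ball x r) := by
    calc ENNReal.ofReal (M * (2 ^ (0 + 1) * r) ^ n)
        = ENNReal.ofReal (β ^ n * M) * ENNReal.ofReal (2 * (r / β)) ^ n := by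
          rw [← ENNReal.ofReal_pow (by positivity), ← ENNReal.ofReal_mul (by positivity)]
          congr 1
          rw [show (2:ℝ) ^ (0 + 1) = 2 by norm_num]
          field_simp
          have hβn : β ^ n * β⁻¹ ^ n = 1 := by rw [← mul_pow, mul_inv_cancel₀ hβ.ne', one_pow]
          linear_combination (-(M * r ^ n * 2 ^ n)) * hβn
      _ ≤ _ := mul_le_mul_right hvolB_lb _
  calc (∫⁻ y in Metric.ball x r, ENNReal.ofReal |f y - ∫ z, p t y z * f z|)
      ≤ ∫⁻ y in Metric.ball x r, (ENNReal.ofReal |f y - c₀| + ENNReal.ofReal (A * M)) := by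
        apply lintegral_mono_ae
        filter_upwards [ae_restrict_mem measurableSet_ball,
          ae_restrict_of_ae (hcons t ht)] with y hy hconsy
        rw [← ENNReal.ofReal_add (abs_nonneg _) (by positivity)]
        exact ENNReal.ofReal_le_ofReal (hptwise y hy hconsy)
    _ = (∫⁻ y in Metric.ball x r, ENNReal.ofReal |f y - c₀|) +
          ENNReal.ofReal (A * M) * volume (Metric.ball x r) := by
        rw [lintegral_add_right _ measurable_const, setLIntegral_const]
    _ ≤ ENNReal.ofReal (M * (2 ^ (0 + 1) * r) ^ n) +
          ENNReal.ofReal (A * M) * volume (Metric.ball x r) := by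
        apply add_le_add_left
        calc (∫⁻ y in Metric.ball x r, ENNReal.ofReal |f y - c₀|)
            ≤ ∫⁻ y in Q 0, ENNReal.ofReal |f y - c₀| := lintegral_mono_set hball_sub
          _ = ENNReal.ofReal (∫ y in Q 0, |f y - c₀|) :=
              (ofReal_integral_eq_lintegral_ofReal (hfabs 0 c₀)
                (Filter.Eventually.of_forall fun z => abs_nonneg _)).symm
          _ ≤ ENNReal.ofReal (M * (2 ^ (0 + 1) * r) ^ n) :=
              ENNReal.ofReal_le_ofReal hQ0bound
    _ ≤ ENNReal.ofReal (β ^ n * M) * volume (Metric.ball x r) +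
          ENNReal.ofReal (A * M) * volume (Metric.ball x r) := add_le_add_left key1 _
    _ = (ENNReal.ofReal (β ^ n * M) + ENNReal.ofReal (A * M)) * volume (Metric.ball x r) :=
        (add_mul _ _ _).symm
    _ = ENNReal.ofReal (β ^ n + A) * bmoNorm f * volume (Metric.ball x r) := by
        rw [← ENNReal.ofReal_add (by positivity) (by positivity), ← hMof,
          ← ENNReal.ofReal_mul (by positivity)]
        congr 2
        ring

/-- a conservative semigroup with Gaussian kernel bounds maps each
`BMO` function to a well-defined function, and the associated `BMO_L` seminorm is
controlled by the classical BMO seminorm. -/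
theorem stmt10 (n : ℕ) (C c : ℝ) (hC : 0 < C) (hc : 0 < c) :
    ∃ c' : ℝ, 0 < c' ∧
      ∀ p : ℝ → En n → En n → ℝ,
        (∀ t : ℝ, Measurable (Function.uncurry (p t))) →
        (∀ t : ℝ, 0 < t → ∀ x y : En n,
          |p t x y| ≤ C * t ^ (-(n : ℝ) / 2) * Real.exp (-c * ‖x - y‖ ^ 2 / t)) →
        (∀ t : ℝ, 0 < t → ∀ᵐ x : En n ∂volume, (∫ y : En n, p t x y) = 1) →
        ∀ f : En n → ℝ, LocallyIntegrable f volume → bmoNorm f < ⊤ →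
          (∀ (x : En n) (r : ℝ), 0 < r →
            ∀ᵐ y ∂(volume.restrict (Metric.ball x r)),
              Integrable (fun z => p (r ^ 2) y z * f z) volume) ∧
          (⨆ (x : En n) (r : ℝ) (_ : 0 < r),
              (∫⁻ y in Metric.ball x r,
                ENNReal.ofReal |f y - ∫ z : En n, p (r ^ 2) y z * f z|) /
                volume (Metric.ball x r))
            ≤ ENNReal.ofReal c' * bmoNorm f := by
  refine ⟨(2 * Real.sqrt n + 2) ^ n +
      C * (4 ^ n * (1 + 2 ^ n) +
        2 * 2 ^ (5 * n) * ∑' k : ℕ, Real.exp (-c * 4 ^ k) * 4 ^ (k * n)), ?_, ?_⟩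
  · have hS0 : (0:ℝ) ≤ ∑' k : ℕ, Real.exp (-c * 4 ^ k) * 4 ^ (k * n) :=
      tsum_nonneg fun k => by positivity
    positivity
  · intro p hmeas hgauss hcons f hf hbmo
    constructor
    · intro x r hr
      filter_upwards [ae_restrict_mem measurableSet_ball] with y hy
      exact (perball hC hc p hmeas hgauss hcons hf hbmo x hr).1 y hy
    · apply iSup_le
      intro x
      apply iSup_le
      intro r
      apply iSup_le
      intro hr
      rw [ENNReal.div_le_iff_le_mul (Or.inl (Metric.measure_ball_pos volume x hr).ne')
        (Or.inl measure_ball_lt_top.ne)]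
      exact (perball hC hc p hmeas hgauss hcons hf hbmo x hr).2
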